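/- Let n be a positive integer, k an integer, and d = gcd(n, k), so d divides n. Consider the ring homomorphism π : ℤ[ZMod n] → ℤ[ZMod d] between integral group rings induced by the natural surjection ZMod n → ZMod d. Then π is surjective and its kernel is the ideal of ℤ[ZMod n] generated by the single element 1 − g^k, where g denotes the standard generator (the group-ring element corresponding to 1 ∈ ZMod n). -/

import Mathlib

open MonoidAlgebra Function

private lemma aux8 (n d : ℕ) (k : ℤ) (hdn : d ∣ n) (hdk : (d : ℤ) ∣ k)
    (a b : ℤ) (hab : (d : ℤ) = a * n + b * k) :
    Function.Surjective (MonoidAlgebra.mapDomainRingHom ℤ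
        (AddMonoidHom.toMultiplicative (ZMod.castHom hdn (ZMod d)).toAddMonoidHom)) ∧
    RingHom.ker (MonoidAlgebra.mapDomainRingHom ℤ
        (AddMonoidHom.toMultiplicative (ZMod.castHom hdn (ZMod d)).toAddMonoidHom))
      = Ideal.span {1 - MonoidAlgebra.of ℤ (Multiplicative (ZMod n))
          (Multiplicative.ofAdd ((k : ZMod n)))} := by
  set c : ZMod n →+* ZMod d := ZMod.castHom hdn (ZMod d) with hc
  set F := AddMonoidHom.toMultiplicative c.toAddMonoidHom with hF
  set π := MonoidAlgebra.mapDomainRingHom ℤ F with hπ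
  have hπ_of : ∀ x : ZMod n,
      π (MonoidAlgebra.of ℤ (Multiplicative (ZMod n)) (Multiplicative.ofAdd x)) =
        MonoidAlgebra.of ℤ (Multiplicative (ZMod d)) (Multiplicative.ofAdd (c x)) := by
    intro x
    simp [hπ, MonoidAlgebra.of_apply, Finsupp.mapDomain_single]
    rfl
  constructor
  · -- surjectivity
    have hFs : Function.Surjective F := by
      intro x
      obtain ⟨m, hm⟩ := ZMod.intCast_surjective (Multiplicative.toAdd x)
      refine ⟨Multiplicative.ofAdd ((m : ZMod n)), ?_⟩
      show Multiplicative.ofAdd (c ((m : ZMod n))) = x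
      rw [map_intCast, hm]
      rfl
    obtain ⟨s, hs⟩ := hFs.hasRightInverse
    intro y
    refine ⟨MonoidAlgebra.ofCoeff (Finsupp.mapDomain s y.coeff), ?_⟩
    show MonoidAlgebra.ofCoeff (Finsupp.mapDomain F (Finsupp.mapDomain s y.coeff)) = y
    rw [← Finsupp.mapDomain_comp, Function.RightInverse.id hs, Finsupp.mapDomain_id]
  · set gk : MonoidAlgebra ℤ (Multiplicative (ZMod n)) :=
      MonoidAlgebra.of ℤ (Multiplicative (ZMod n)) (Multiplicative.ofAdd ((k : ZMod n))) with hgk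
    set I : Ideal (MonoidAlgebra ℤ (Multiplicative (ZMod n))) := Ideal.span {1 - gk} with hI
    have hmem : 1 - gk ∈ I := Ideal.subset_span rfl
    have hπgk : π gk = 1 := by
      rw [hgk, hπ_of]
      have : c ((k : ZMod n)) = 0 := by
        rw [map_intCast, ZMod.intCast_zmod_eq_zero_iff_dvd]
        exact hdk
      rw [this]
      rfl
    apply le_antisymm
    · -- ker ⊆ span
      set Q := MonoidAlgebra ℤ (Multiplicative (ZMod n)) ⧸ I
      set mk : MonoidAlgebra ℤ (Multiplicative (ZMod n)) →+* Q := Ideal.Quotient.mk I with hmk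
      have hmkgk : mk gk = 1 := by
        rw [← map_one mk]
        exact (Ideal.Quotient.eq).mpr (by simpa using (neg_mem_iff.mpr hmem : -(1 - gk) ∈ I))
      set v : Multiplicative (ZMod n) →* Qˣ :=
        MonoidHom.toHomUnits ((mk.toMonoidHom).comp (MonoidAlgebra.of ℤ (Multiplicative (ZMod n))))
        with hv
      have hv_coe : ∀ x : Multiplicative (ZMod n),
          (v x : Q) = mk (MonoidAlgebra.of ℤ (Multiplicative (ZMod n)) x) := fun x => rfl
      set φℤ : ℤ →+ Additive Qˣ :=
        { toFun := fun m => Additive.ofMul (v (Multiplicative.ofAdd ((m : ZMod n))))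
          map_zero' := by simp
          map_add' := fun x y => by
            push_cast
            simp [ofAdd_add] } with hφℤ
      have hvk : v (Multiplicative.ofAdd ((k : ZMod n))) = 1 := by
        ext
        rw [hv_coe]
        simpa [hgk] using hmkgk
      have h0 : φℤ d = 0 := by
        have hd : ((d : ℤ) : ZMod n) = b • ((k : ZMod n)) := by
          rw [hab]
          push_cast
          simp [zsmul_eq_mul]
        show Additive.ofMul (v (Multiplicative.ofAdd (((d : ℤ) : ZMod n)))) = 0
        rw [hd, ofAdd_zsmul, map_zpow, hvk, one_zpow]
        rfl
      set ψ : Multiplicative (ZMod d) →* Qˣ :=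
        AddMonoidHom.toMultiplicativeLeft (ZMod.lift d ⟨φℤ, h0⟩) with hψ
      set σ : MonoidAlgebra ℤ (Multiplicative (ZMod d)) →+* Q :=
        (MonoidAlgebra.lift ℤ Q (Multiplicative (ZMod d)) ((Units.coeHom Q).comp ψ)).toRingHom
        with hσ
      have key : σ.comp π = mk := by
        apply MonoidAlgebra.ringHom_ext
        · intro r
          have h1 : (MonoidAlgebra.single (1 : Multiplicative (ZMod n)) r) =
              ((r : MonoidAlgebra ℤ (Multiplicative (ZMod n)))) := by
            rw [MonoidAlgebra.intCast_def, Int.cast_id]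
          rw [h1, map_intCast, map_intCast]
        · intro x
          obtain ⟨m, hm⟩ := ZMod.intCast_surjective (Multiplicative.toAdd x)
          have hx : x = Multiplicative.ofAdd ((m : ZMod n)) := by
            rw [hm]; rfl
          subst hx
          show σ (π (MonoidAlgebra.of ℤ (Multiplicative (ZMod n)) _)) =
            mk (MonoidAlgebra.of ℤ (Multiplicative (ZMod n)) _)
          rw [hπ_of]
          have hcast : c ((m : ZMod n)) = (m : ZMod d) := map_intCast c m
          rw [hcast]
          have : σ (MonoidAlgebra.of ℤ (Multiplicative (ZMod d))
              (Multiplicative.ofAdd ((m : ZMod d)))) =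
              ((ψ (Multiplicative.ofAdd ((m : ZMod d))) : Qˣ) : Q) := by
            rw [hσ]
            simp [MonoidAlgebra.lift_of]
          rw [this]
          have : ψ (Multiplicative.ofAdd ((m : ZMod d))) =
              v (Multiplicative.ofAdd ((m : ZMod n))) := by
            show (ZMod.lift d ⟨φℤ, h0⟩ ((m : ZMod d))).toMul = _
            rw [ZMod.lift_coe]
            rfl
          rw [this, hv_coe]
      intro x hx
      have hx0 : π x = 0 := hx
      have : mk x = 0 := by
        rw [← key]
        show σ (π x) = 0
        rw [hx0, map_zero]
      exact (Ideal.Quotient.eq_zero_iff_mem).mp this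
    · -- span ⊆ ker
      rw [Ideal.span_le]
      rintro x rfl
      simp only [SetLike.mem_coe, RingHom.mem_ker, map_sub, map_one, hπgk, sub_self]

/-- The ring homomorphism `ℤ[ZMod n] → ℤ[ZMod d]` (with `d = gcd n k`) induced by
reduction mod `d` is surjective with kernel the ideal generated by `1 - g^k`. -/
theorem stmt_8 (n : ℕ) (hn : 0 < n) (k : ℤ) :
    Function.Surjective
      (MonoidAlgebra.mapDomainRingHom ℤ
        (AddMonoidHom.toMultiplicative
          (ZMod.castHom
            (Int.natCast_dvd_natCast.mp (Int.gcd_dvd_left (a := (n : ℤ)) (b := k)))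
            (ZMod (Int.gcd (n : ℤ) k))).toAddMonoidHom)) ∧
    RingHom.ker
      (MonoidAlgebra.mapDomainRingHom ℤ
        (AddMonoidHom.toMultiplicative
          (ZMod.castHom
            (Int.natCast_dvd_natCast.mp (Int.gcd_dvd_left (a := (n : ℤ)) (b := k)))
            (ZMod (Int.gcd (n : ℤ) k))).toAddMonoidHom))
      = Ideal.span
          {1 - MonoidAlgebra.of ℤ (Multiplicative (ZMod n))
              (Multiplicative.ofAdd ((k : ZMod n)))} := by
  refine aux8 n (Int.gcd (n : ℤ) k) k _ (Int.gcd_dvd_right _ _)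
    (Int.gcdA (n : ℤ) k) (Int.gcdB (n : ℤ) k) ?_
  have := Int.gcd_eq_gcd_ab (n : ℤ) k
  linarith [this]
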